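/- Let p, r be positive natural numbers, let x ∈ ℝ^p with x ≠ 0, let v ∈ ℝ^r with v ≠ 0, and let p₁, p₂ > 0. Define F : Matrix (Fin p) (Fin r) ℝ → ℝ by F(W) = p₁ · log(1 + exp(−⟨v, Wᵀx⟩)) + p₂ · log(1 + exp(⟨v, Wᵀx⟩)), where ⟨·,·⟩ is the Euclidean inner product on ℝ^r and Wᵀx denotes the matrix-vector product of the transpose of W with x. If Ŵ is a critical point of F (i.e., the Fréchet derivative of F at Ŵ is zero; in particular if Ŵ minimizes F), then log(p₁/p₂) = ⟨v, Ŵᵀx⟩. -/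

import Mathlib

set_option maxHeartbeats 1000000


open Matrix

attribute [local instance] Matrix.normedAddCommGroup Matrix.normedSpace

theorem stmt_3 (p r : ℕ) (hp : 0 < p) (hr : 0 < r)
    (x : Fin p → ℝ) (hx : x ≠ 0)
    (v : Fin r → ℝ) (hv : v ≠ 0)
    (p₁ p₂ : ℝ) (hp₁ : 0 < p₁) (hp₂ : 0 < p₂)
    (F : Matrix (Fin p) (Fin r) ℝ → ℝ)
    (hF : F = fun W => p₁ * Real.log (1 + Real.exp (-(v ⬝ᵥ (Wᵀ *ᵥ x)))) +
                       p₂ * Real.log (1 + Real.exp (v ⬝ᵥ (Wᵀ *ᵥ x))))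
    (What : Matrix (Fin p) (Fin r) ℝ)
    (hcrit : fderiv ℝ F What = 0) :
    Real.log (p₁ / p₂) = v ⬝ᵥ (Whatᵀ *ᵥ x) := by
  classical
  -- The linear map W ↦ v ⬝ᵥ (Wᵀ *ᵥ x)
  set Llin : Matrix (Fin p) (Fin r) ℝ →ₗ[ℝ] ℝ :=
    { toFun := fun W => v ⬝ᵥ (Wᵀ *ᵥ x)
      map_add' := by
        intro A B
        simp [Matrix.transpose_add, Matrix.add_mulVec, dotProduct_add]
      map_smul' := by
        intro c A
        simp [Matrix.transpose_smul, Matrix.smul_mulVec, dotProduct_smul] } with hLlin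
  set L : Matrix (Fin p) (Fin r) ℝ →L[ℝ] ℝ := Llin.toContinuousLinearMap with hL
  set s : ℝ := v ⬝ᵥ (Whatᵀ *ᵥ x) with hs
  have hpos1 : (0:ℝ) < 1 + Real.exp (-s) := by positivity
  have hpos2 : (0:ℝ) < 1 + Real.exp s := by positivity
  -- derivative of the scalar function
  set d : ℝ := p₁ * (-Real.exp (-s) / (1 + Real.exp (-s))) +
               p₂ * (Real.exp s / (1 + Real.exp s)) with hd
  have hg : HasDerivAt (fun t : ℝ => p₁ * Real.log (1 + Real.exp (-t)) +
      p₂ * Real.log (1 + Real.exp t)) d s := by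
    have h1 : HasDerivAt (fun t : ℝ => Real.log (1 + Real.exp (-t)))
        (-Real.exp (-s) / (1 + Real.exp (-s))) s := by
      have hneg : HasDerivAt (fun t : ℝ => -t) (-1) s := (hasDerivAt_id s).neg
      have hexp : HasDerivAt (fun t : ℝ => Real.exp (-t)) (Real.exp (-s) * (-1)) s :=
        (Real.hasDerivAt_exp (-s)).comp s hneg
      have hadd : HasDerivAt (fun t : ℝ => 1 + Real.exp (-t)) (Real.exp (-s) * (-1)) s :=
        hexp.const_add 1
      have := hadd.log hpos1.ne'
      convert this using 1
      ring
    have h2 : HasDerivAt (fun t : ℝ => Real.log (1 + Real.exp t))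
        (Real.exp s / (1 + Real.exp s)) s := by
      have hadd : HasDerivAt (fun t : ℝ => 1 + Real.exp t) (Real.exp s) s :=
        (Real.hasDerivAt_exp s).const_add 1
      exact hadd.log hpos2.ne'
    exact (h1.const_mul p₁).add (h2.const_mul p₂)
  have hLd : HasFDerivAt (fun W : Matrix (Fin p) (Fin r) ℝ => v ⬝ᵥ (Wᵀ *ᵥ x)) L What := by
    exact L.hasFDerivAt
  have hFd : HasFDerivAt F (d • L) What := by
    rw [hF]
    exact hg.comp_hasFDerivAt What hLd
  have hDzero : (d • L : Matrix (Fin p) (Fin r) ℝ →L[ℝ] ℝ) = 0 := by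
    rw [← hFd.fderiv, hcrit]
  -- Evaluate at W₀ i j = x i * v j
  set W₀ : Matrix (Fin p) (Fin r) ℝ := fun i j => x i * v j with hW₀
  have hxsum : (0:ℝ) < ∑ i, x i ^ 2 := by
    obtain ⟨i, hi⟩ := Function.ne_iff.mp hx
    apply Finset.sum_pos' (fun i _ => sq_nonneg _)
    exact ⟨i, Finset.mem_univ i, pow_two_pos_of_ne_zero hi⟩
  have hvsum : (0:ℝ) < ∑ j, v j ^ 2 := by
    obtain ⟨j, hj⟩ := Function.ne_iff.mp hv
    apply Finset.sum_pos' (fun j _ => sq_nonneg _)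
    exact ⟨j, Finset.mem_univ j, pow_two_pos_of_ne_zero hj⟩
  have hLW₀ : L W₀ = (∑ i, x i ^ 2) * (∑ j, v j ^ 2) := by
    show v ⬝ᵥ (W₀ᵀ *ᵥ x) = _
    simp only [dotProduct, Matrix.mulVec, Matrix.transpose_apply, hW₀, dotProduct,
      Finset.mul_sum, Finset.sum_mul]
    apply Finset.sum_congr rfl
    intro i _
    apply Finset.sum_congr rfl
    intro j _
    show v i * ((x j * v i) * x j) = x j ^ 2 * v i ^ 2
    ring
  have hdzero : d = 0 := by
    have := congrArg (fun f : Matrix (Fin p) (Fin r) ℝ →L[ℝ] ℝ => f W₀) hDzero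
    simp only [ContinuousLinearMap.smul_apply, ContinuousLinearMap.zero_apply] at this
    rw [hLW₀] at this
    have hne : (∑ i, x i ^ 2) * (∑ j, v j ^ 2) ≠ 0 := by positivity
    exact (mul_eq_zero.mp this).resolve_right hne
  -- solve for s
  have hexpneg : Real.exp (-s) = (Real.exp s)⁻¹ := Real.exp_neg s
  have hes : (0:ℝ) < Real.exp s := Real.exp_pos s
  have key : p₂ * Real.exp s = p₁ := by
    rw [hd, hexpneg] at hdzero
    have h1 : (1 + (Real.exp s)⁻¹) ≠ 0 := by positivity
    have h2 : (1 + Real.exp s) ≠ 0 := hpos2.ne'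
    field_simp at hdzero
    nlinarith [hes, hdzero]
  have : Real.exp s = p₁ / p₂ := by
    field_simp
    linarith [key]
  rw [← this, Real.log_exp]
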